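/- Let (X,d,⪯) be an ordered metric space and E an O̅-complete subset of X. Let T, S be self-maps of X with T(X) ⊆ E ⊆ S(X) and T S-increasing. Suppose there exists a continuous half-comparison function ρ such that d(Tx,Ty) ≤ ρ(max{d(Sx,Sy), d(Sx,Tx), d(Sy,Ty), d(Sx,Ty), d(Sy,Tx)}) for all x, y ∈ X with Sx ⪯ Sy. If there exists x₀ ∈ X with Sx₀ ⪯ Tx₀ and (E,d,⪯) is I-regular relative to S, then (T,S) has a coincidence point. If moreover (T,S) is weakly compatible and C(T,S) is (T,S)-directed, then (T,S) has a unique common fixed point, and for any such x₀ every T-S-sequence {Txₙ} with initial point x₀ converges to it. -/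
import Mathlib


open Filter Topology

/-- A comparison function: `φ : [0,∞) → [0,∞)` increasing with `φ^[n] t → 0` for all `t > 0`. -/
def IsComparisonFn (φ : ℝ → ℝ) : Prop :=
  (∀ t, 0 ≤ t → 0 ≤ φ t) ∧
  (∀ s t, 0 ≤ s → s ≤ t → φ s ≤ φ t) ∧
  (∀ t, 0 < t → Tendsto (fun n => φ^[n] t) atTop (𝓝 0))

/-- A half-comparison function: a comparison function `ρ` such that `t ↦ ρ (2 t)`
is also a comparison function. -/
def IsHalfComparisonFn (ρ : ℝ → ℝ) : Prop :=
  IsComparisonFn ρ ∧ IsComparisonFn (fun t => ρ (2 * t))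

/-- Two elements are comparable in a preorder. -/
def CmpRel {X : Type*} [Preorder X] (a b : X) : Prop := a ≤ b ∨ b ≤ a

/-- `T` is `S`-increasing. -/
def SIncreasing {X : Type*} [Preorder X] (T S : X → X) : Prop :=
  ∀ x y, S x ≤ S y → T x ≤ T y

/-- `E` is `O̅`-complete: every increasing Cauchy sequence in `E` converges in `E`. -/
def OBarComplete {X : Type*} [MetricSpace X] [Preorder X] (E : Set X) : Prop :=
  ∀ u : ℕ → X, (∀ n, u n ∈ E) → Monotone u → CauchySeq u → ∃ z ∈ E, Tendsto u atTop (𝓝 z)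

/-- `(E,d,⪯)` is I-regular relative to `S`: every increasing sequence `{S xₙ}` in `E`
converging to some `S z` admits a subsequence whose terms are all comparable with `S z`,
and moreover `S z ⪯ S (S z)`. -/
def IRegularOn {X : Type*} [MetricSpace X] [Preorder X] (E : Set X) (S : X → X) : Prop :=
  ∀ (x : ℕ → X) (z : X), (∀ n, S (x n) ∈ E) → Monotone (fun n => S (x n)) →
    Tendsto (fun n => S (x n)) atTop (𝓝 (S z)) →
    ((∃ k : ℕ → ℕ, StrictMono k ∧ ∀ n, CmpRel (S (x (k n))) (S z)) ∧ S z ≤ S (S z))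

/-- The pair `(T,S)` is weakly compatible. -/
def WeaklyCompatible {X : Type*} (T S : X → X) : Prop :=
  ∀ x, S x = T x → S (T x) = T (S x)

/-- The set of coincidence points `C(T,S)` is `(T,S)`-directed. -/
def CoincTSDirected {X : Type*} [Preorder X] (T S : X → X) : Prop :=
  ∀ x y, S x = T x → S y = T y → ∃ z, CmpRel (T x) (S z) ∧ CmpRel (T y) (S z)

/-- The set of coincidence points `C(T,S)` is totally ordered by `⪯`. -/
def CoincTotallyOrdered {X : Type*} [Preorder X] (T S : X → X) : Prop :=
  ∀ x y, S x = T x → S y = T y → CmpRel x y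

/-- `T` is `(S,O̅)`-continuous. -/
def SOBarContinuous {X : Type*} [MetricSpace X] [Preorder X] (T S : X → X) : Prop :=
  ∀ (x : ℕ → X) (a : X), Monotone (fun n => S (x n)) →
    Tendsto (fun n => S (x n)) atTop (𝓝 (S a)) →
    Tendsto (fun n => T (x n)) atTop (𝓝 (T a))

/-- A self-map `f` is `O̅`-continuous. -/
def OBarContinuous {X : Type*} [MetricSpace X] [Preorder X] (f : X → X) : Prop :=
  ∀ (x : ℕ → X) (a : X), Monotone x → Tendsto x atTop (𝓝 a) →
    Tendsto (fun n => f (x n)) atTop (𝓝 (f a))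

/-- The pair `(T,S)` is `O̅`-compatible. -/
def OBarCompatible {X : Type*} [MetricSpace X] [Preorder X] (T S : X → X) : Prop :=
  ∀ (x : ℕ → X) (z : X), Monotone (fun n => S (x n)) → Monotone (fun n => T (x n)) →
    Tendsto (fun n => S (x n)) atTop (𝓝 z) → Tendsto (fun n => T (x n)) atTop (𝓝 z) →
    Tendsto (fun n => dist (S (T (x n))) (T (S (x n)))) atTop (𝓝 0)

/-- A comparable mapping maps comparable elements to comparable elements. -/
def ComparableMap {X : Type*} [Preorder X] (f : X → X) : Prop :=
  ∀ x y, CmpRel x y → CmpRel (f x) (f y)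

/-- Continuity of a 6-variable function on `[0,∞)⁶`. -/
def ContOnNonneg6 (F : ℝ → ℝ → ℝ → ℝ → ℝ → ℝ → ℝ) : Prop :=
  ContinuousOn
    (fun p : ℝ × ℝ × ℝ × ℝ × ℝ × ℝ => F p.1 p.2.1 p.2.2.1 p.2.2.2.1 p.2.2.2.2.1 p.2.2.2.2.2)
    (Set.Ici 0 ×ˢ Set.Ici 0 ×ˢ Set.Ici 0 ×ˢ Set.Ici 0 ×ˢ Set.Ici 0 ×ˢ Set.Ici 0)

/-- Condition (F1a): `F` is decreasing in the fifth variable and there is a comparison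
function `φ` such that `F(u,v,v,u,u+v,0) ≤ 0` implies `u ≤ φ v` for `u, v ≥ 0`. -/
def CondF1a (F : ℝ → ℝ → ℝ → ℝ → ℝ → ℝ → ℝ) : Prop :=
  (∀ t1 t2 t3 t4 t6, 0 ≤ t1 → 0 ≤ t2 → 0 ≤ t3 → 0 ≤ t4 → 0 ≤ t6 →
      AntitoneOn (fun t5 => F t1 t2 t3 t4 t5 t6) (Set.Ici 0)) ∧
  (∃ φ, IsComparisonFn φ ∧ ∀ u v, 0 ≤ u → 0 ≤ v → F u v v u (u + v) 0 ≤ 0 → u ≤ φ v)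

/-- Condition (F1b): `F` is decreasing in the fourth variable and there is a comparison
function `φ` such that `F(u,v,0,u+v,u,v) ≤ 0` implies `u ≤ φ v` for `u, v ≥ 0`. -/
def CondF1b (F : ℝ → ℝ → ℝ → ℝ → ℝ → ℝ → ℝ) : Prop :=
  (∀ t1 t2 t3 t5 t6, 0 ≤ t1 → 0 ≤ t2 → 0 ≤ t3 → 0 ≤ t5 → 0 ≤ t6 →
      AntitoneOn (fun t4 => F t1 t2 t3 t4 t5 t6) (Set.Ici 0)) ∧
  (∃ φ, IsComparisonFn φ ∧ ∀ u v, 0 ≤ u → 0 ≤ v → F u v 0 (u + v) u v ≤ 0 → u ≤ φ v)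

/-- Condition (F1c): `F` is decreasing in the third variable and there is a comparison
function `φ` such that `F(u,v,u+v,0,v,u) ≤ 0` implies `u ≤ φ v` for `u, v ≥ 0`. -/
def CondF1c (F : ℝ → ℝ → ℝ → ℝ → ℝ → ℝ → ℝ) : Prop :=
  (∀ t1 t2 t4 t5 t6, 0 ≤ t1 → 0 ≤ t2 → 0 ≤ t4 → 0 ≤ t5 → 0 ≤ t6 →
      AntitoneOn (fun t3 => F t1 t2 t3 t4 t5 t6) (Set.Ici 0)) ∧
  (∃ φ, IsComparisonFn φ ∧ ∀ u v, 0 ≤ u → 0 ≤ v → F u v (u + v) 0 v u ≤ 0 → u ≤ φ v)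

/-- Condition (F2): `F(u,u,0,0,u,u) > 0` for all `u > 0`. -/
def CondF2 (F : ℝ → ℝ → ℝ → ℝ → ℝ → ℝ → ℝ) : Prop :=
  ∀ u, 0 < u → 0 < F u u 0 0 u u


lemma comp_lt {φ : ℝ → ℝ} (h : IsComparisonFn φ) {t : ℝ} (ht : 0 < t) : φ t < t := by
  by_contra hc
  push_neg at hc
  have hiter : ∀ n, t ≤ φ^[n] t := by
    intro n
    induction n with
    | zero => simp
    | succ n ih =>
      rw [Function.iterate_succ_apply']
      exact le_trans hc (h.2.1 t _ ht.le ih)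
  have := ge_of_tendsto' (h.2.2 t ht) hiter
  linarith

lemma comp_zero {φ : ℝ → ℝ} (h : IsComparisonFn φ) : φ 0 = 0 := by
  refine le_antisymm ?_ (h.1 0 le_rfl)
  have : ∀ ε > (0:ℝ), φ 0 ≤ 0 + ε := by
    intro ε hε
    have := (h.2.1 0 ε le_rfl hε.le).trans (comp_lt h hε).le
    linarith
  exact le_of_forall_pos_le_add this

lemma comp_le {φ : ℝ → ℝ} (h : IsComparisonFn φ) {t : ℝ} (ht : 0 ≤ t) : φ t ≤ t := by
  rcases eq_or_lt_of_le ht with rfl | ht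
  · exact le_of_eq (comp_zero h)
  · exact (comp_lt h ht).le

lemma comp_iter_tendsto {φ : ℝ → ℝ} (h : IsComparisonFn φ) {t : ℝ} (ht : 0 ≤ t) :
    Tendsto (fun n => φ^[n] t) atTop (𝓝 0) := by
  rcases eq_or_lt_of_le ht with rfl | ht
  · have : ∀ n, φ^[n] (0:ℝ) = 0 := by
      intro n; induction n with
      | zero => simp
      | succ n ih => rw [Function.iterate_succ_apply', ih, comp_zero h]
    simpa [this] using tendsto_const_nhds (α := ℝ) (f := atTop (α := ℕ))
  · exact h.2.2 t ht

lemma iter_seq_tendsto {φ : ℝ → ℝ} (h : IsComparisonFn φ) (a : ℕ → ℝ)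
    (ha : ∀ n, 0 ≤ a n) (hstep : ∀ n, a (n + 1) ≤ φ (a n)) :
    Tendsto a atTop (𝓝 0) := by
  have hb : ∀ n, a n ≤ φ^[n] (a 0) := by
    intro n
    induction n with
    | zero => simp
    | succ n ih =>
      rw [Function.iterate_succ_apply']
      exact (hstep n).trans (h.2.1 _ _ (ha n) ih)
  exact squeeze_zero ha hb (comp_iter_tendsto h (ha 0))

def MF {X : Type*} [MetricSpace X] (T S : X → X) (x y : X) : ℝ :=
  max (dist (S x) (S y)) (max (dist (S x) (T x)) (max (dist (S y) (T y))
    (max (dist (S x) (T y)) (dist (S y) (T x)))))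

lemma MF_nonneg {X : Type*} [MetricSpace X] (T S : X → X) (x y : X) : 0 ≤ MF T S x y :=
  dist_nonneg.trans (le_max_left _ _)

lemma MF_le {X : Type*} [MetricSpace X] {T S : X → X} {x y : X} {b : ℝ}
    (h1 : dist (S x) (S y) ≤ b) (h2 : dist (S x) (T x) ≤ b) (h3 : dist (S y) (T y) ≤ b)
    (h4 : dist (S x) (T y) ≤ b) (h5 : dist (S y) (T x) ≤ b) : MF T S x y ≤ b :=
  max_le h1 (max_le h2 (max_le h3 (max_le h4 h5)))

lemma MF_swap_le {X : Type*} [MetricSpace X] (T S : X → X) (x y : X) :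
    MF T S y x ≤ MF T S x y := by
  refine MF_le ?_ ?_ ?_ ?_ ?_
  · rw [dist_comm]; exact le_max_left _ _
  · exact le_max_of_le_right (le_max_of_le_right (le_max_left _ _))
  · exact le_max_of_le_right (le_max_left _ _)
  · exact le_max_of_le_right (le_max_of_le_right (le_max_of_le_right
      (le_max_of_le_right le_rfl)))
  · exact le_max_of_le_right (le_max_of_le_right (le_max_of_le_right (le_max_left _ _)))

lemma half_step {ρ : ℝ → ℝ} (hρ : IsHalfComparisonFn ρ) {A B M : ℝ}
    (hA : 0 ≤ A) (hM : 0 ≤ M) (hBM : B ≤ ρ M) (hMAB : M ≤ A + B) : B ≤ ρ (2 * A) := by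
  rcases le_or_gt B A with h | h
  · exact hBM.trans (hρ.1.2.1 M (2 * A) hM (by linarith))
  · have hB0 : 0 < B := lt_of_le_of_lt hA h
    have h1 : B ≤ ρ (2 * B) := hBM.trans (hρ.1.2.1 M (2 * B) hM (by linarith))
    have h2 : ρ (2 * B) < B := by simpa using comp_lt hρ.2 hB0
    linarith

lemma contr' {X : Type*} [MetricSpace X] [PartialOrder X] {T S : X → X} {ρ : ℝ → ℝ}
    (hρ : IsComparisonFn ρ)
    (hcontr : ∀ x y, S x ≤ S y → dist (T x) (T y) ≤ ρ (MF T S x y))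
    (x y : X) (h : CmpRel (S x) (S y)) : dist (T x) (T y) ≤ ρ (MF T S x y) := by
  rcases h with h | h
  · exact hcontr x y h
  · have := hcontr y x h
    rw [dist_comm (T y) (T x)] at this
    exact this.trans (hρ.2.1 _ _ (MF_nonneg T S y x) (MF_swap_le T S x y))

lemma key_coinc {X : Type*} [MetricSpace X] [PartialOrder X]
    (E : Set X) (T S : X → X)
    (hTE : ∀ x, T x ∈ E) (hES : E ⊆ Set.range S) (hTS : SIncreasing T S)
    (ρ : ℝ → ℝ) (hρ : IsHalfComparisonFn ρ) (hρc : ContinuousOn ρ (Set.Ici 0))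
    (hcontr : ∀ x y, S x ≤ S y → dist (T x) (T y) ≤ ρ (MF T S x y))
    (hE : OBarComplete E) (hreg : IRegularOn E S)
    (x : ℕ → X) (hx1 : S (x 0) ≤ T (x 0)) (hx2 : ∀ n, S (x (n + 1)) = T (x n)) :
    ∃ p, S p = T p ∧ S p ≤ S (S p) ∧ Tendsto (fun n => T (x n)) atTop (𝓝 (S p)) := by
  classical
  set d : ℕ → ℝ := fun n => dist (S (x n)) (S (x (n + 1))) with hdd
  have hdnn : ∀ n, 0 ≤ d n := fun n => dist_nonneg
  -- monotonicity of S ∘ x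
  have hmono : ∀ n, S (x n) ≤ S (x (n + 1)) := by
    intro n
    induction n with
    | zero => rw [hx2 0]; exact hx1
    | succ n ih => rw [hx2 n, hx2 (n + 1)]; exact hTS _ _ ih
  have hmonoU : Monotone (fun n => S (x n)) := monotone_nat_of_le_succ hmono
  -- basic step inequality
  have hdstep : ∀ n, d (n + 1) ≤ ρ (2 * d n) := by
    intro n
    refine half_step hρ (hdnn n) (MF_nonneg T S (x n) (x (n + 1))) ?_ ?_
    · have e1 : d (n + 1) = dist (T (x n)) (T (x (n + 1))) := by
        simp only [hdd]; rw [hx2 n, hx2 (n + 1)]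
      rw [e1]
      exact hcontr (x n) (x (n + 1)) (hmono n)
    · refine MF_le ?_ ?_ ?_ ?_ ?_
      · have := hdnn (n + 1); simp only [hdd] at *; linarith
      · rw [← hx2 n]; have := hdnn (n + 1); simp only [hdd] at *; linarith
      · rw [← hx2 (n + 1)]; have := hdnn n; simp only [hdd] at *; linarith
      · rw [← hx2 (n + 1)]
        have := dist_triangle (S (x n)) (S (x (n + 1))) (S (x (n + 2)))
        simp only [hdd]; linarith
      · rw [← hx2 n]; simp only [dist_self]
        have := hdnn n; have := hdnn (n + 1); linarith
  have hdanti1 : ∀ n, d (n + 1) ≤ d n := by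
    intro n
    have : ρ (2 * d n) ≤ d n := by simpa using comp_le hρ.2 (hdnn n)
    exact (hdstep n).trans this
  have hdanti : Antitone d := antitone_nat_of_succ_le hdanti1
  have hd0 : Tendsto d atTop (𝓝 0) :=
    iter_seq_tendsto hρ.2 d hdnn (fun n => by simpa using hdstep n)
  -- Cauchy
  have hcauchy : CauchySeq (fun n => S (x n)) := by
    rw [Metric.cauchySeq_iff]
    by_contra hC
    push_neg at hC
    obtain ⟨ε, hε, H⟩ := hC
    have main : ∀ N, ε - 2 * d N ≤ ρ (ε + 3 * d N) := by
      intro N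
      obtain ⟨m, hm, n, hn, hdist⟩ := H N
      obtain ⟨q, m0, hqN, hqm, hdq⟩ :
          ∃ q m0, N ≤ q ∧ q < m0 ∧ ε ≤ dist (S (x q)) (S (x m0)) := by
        rcases lt_trichotomy n m with h | h | h
        · exact ⟨n, m, hn, h, by rwa [dist_comm]⟩
        · exfalso; rw [h, dist_self] at hdist; linarith
        · exact ⟨m, n, hm, h, hdist⟩
      have hex : ∃ k, q < k ∧ ε ≤ dist (S (x q)) (S (x k)) := ⟨m0, hqm, hdq⟩
      set mm := Nat.find hex with hmm
      obtain ⟨hqmm, hεmm⟩ := Nat.find_spec hex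
      have hupper : dist (S (x q)) (S (x mm)) < ε + d q := by
        have h1 : q ≤ mm - 1 := by omega
        have hmm1 : mm - 1 + 1 = mm := by omega
        have htri : dist (S (x q)) (S (x mm)) ≤
            dist (S (x q)) (S (x (mm - 1))) + d (mm - 1) := by
          have := dist_triangle (S (x q)) (S (x (mm - 1))) (S (x mm))
          simp only [hdd]
          rw [hmm1]
          exact this
        have hlt : dist (S (x q)) (S (x (mm - 1))) < ε := by
          rcases eq_or_lt_of_le h1 with he | hlt'
          · rw [← he, dist_self]; exact hε
          · have := Nat.find_min hex (show mm - 1 < mm by omega)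
            push_neg at this
            have h2 := this hlt'
            linarith [lt_of_not_ge (fun hcon => absurd (this hlt') (not_lt.2 hcon))]
        have hdle : d (mm - 1) ≤ d q := hdanti h1
        linarith
      have hdm : d mm ≤ d q := hdanti hqmm.le
      have hdqN : d q ≤ d N := hdanti hqN
      have hc := contr' hρ.1 hcontr (x q) (x mm) (Or.inl (hmonoU hqmm.le))
      set a := dist (S (x q)) (S (x mm)) with ha
      have hMF : MF T S (x q) (x mm) ≤ a + 2 * d q := by
        refine MF_le ?_ ?_ ?_ ?_ ?_
        · have := hdnn q; linarith
        · rw [← hx2 q]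
          have := hdnn q; have := hdnn mm
          simp only [hdd] at *; linarith
        · rw [← hx2 mm]
          have : d mm ≤ d q := hdm
          simp only [hdd] at *
          have := hdnn q; linarith
        · rw [← hx2 mm]
          have htri := dist_triangle (S (x q)) (S (x mm)) (S (x (mm + 1)))
          simp only [hdd] at *
          linarith
        · rw [← hx2 q]
          have htri := dist_triangle (S (x mm)) (S (x q)) (S (x (q + 1)))
          rw [dist_comm (S (x mm)) (S (x q))] at htri
          simp only [hdd] at *
          have := hdnn mm; linarith
      have hlow : a - 2 * d q ≤ dist (T (x q)) (T (x mm)) := by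
        have htri := dist_triangle4 (S (x q)) (S (x (q + 1))) (S (x (mm + 1))) (S (x mm))
        rw [hx2 q, hx2 mm, dist_comm (T (x mm)) (S (x mm))] at htri
        have e2 : dist (S (x mm)) (T (x mm)) = d mm := by
          simp only [hdd]; rw [hx2 mm]
        have e3 : dist (S (x q)) (T (x q)) = d q := by
          simp only [hdd]; rw [hx2 q]
        rw [e2, e3] at htri
        simp only [ha] at *
        linarith
      have step1 : ε - 2 * d N ≤ a - 2 * d q := by linarith
      have step2 : ρ (MF T S (x q) (x mm)) ≤ ρ (ε + 3 * d N) := by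
        refine hρ.1.2.1 _ _ (MF_nonneg T S (x q) (x mm)) ?_
        linarith
      linarith
    have hL : Tendsto (fun N => ε - 2 * d N) atTop (𝓝 ε) := by
      have := hd0.const_mul (2 : ℝ)
      have h2 := tendsto_const_nhds (x := ε) (f := atTop (α := ℕ)) |>.sub this
      simpa using h2
    have hR : Tendsto (fun N => ρ (ε + 3 * d N)) atTop (𝓝 (ρ ε)) := by
      have h1 : Tendsto (fun N => ε + 3 * d N) atTop (𝓝 ε) := by
        have := hd0.const_mul (3 : ℝ)
        have h2 := tendsto_const_nhds (x := ε) (f := atTop (α := ℕ)) |>.add this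
        simpa using h2
      have h2 : Tendsto (fun N => ε + 3 * d N) atTop (𝓝[Set.Ici 0] ε) :=
        tendsto_nhdsWithin_of_tendsto_nhds_of_eventually_within _ h1
          (Eventually.of_forall fun N => by
            have := hdnn N; simp only [Set.mem_Ici]; linarith)
      exact ((hρc ε hε.le).tendsto).comp h2
    have hfin : ε ≤ ρ ε := le_of_tendsto_of_tendsto' hL hR main
    exact absurd hfin (not_le.2 (comp_lt hρ.1 hε))
  -- completeness: limit point
  have hv : ∀ n, S (x (n + 1)) ∈ E := fun n => (hx2 n) ▸ hTE (x n)
  have hvmono : Monotone (fun n => S (x (n + 1))) := fun a b h =>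
    hmonoU (by omega : a + 1 ≤ b + 1)
  have hvcauchy : CauchySeq (fun n => S (x (n + 1))) := by
    have : Tendsto (fun n : ℕ => n + 1) atTop atTop := tendsto_add_atTop_nat 1
    exact hcauchy.comp_tendsto this
  obtain ⟨z, hzE, hzlim⟩ := hE _ hv hvmono hvcauchy
  obtain ⟨p, hp⟩ := hES hzE
  rw [← hp] at hzlim
  obtain ⟨⟨k, hk, hkcmp⟩, hSpSSp⟩ := hreg (fun n => x (n + 1)) p hv hvmono hzlim
  -- show S p = T p
  have hklim : Tendsto (fun n => S (x (k n + 1))) atTop (𝓝 (S p)) :=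
    hzlim.comp hk.tendsto_atTop
  set en : ℕ → ℝ := fun n => dist (S (x (k n + 1))) (S p) + d (k n + 1) with hen
  set r := dist (S p) (T p) with hr
  have hstep : ∀ n, r - en n ≤ ρ (r + en n) := by
    intro n
    set j := k n + 1 with hj
    have hcmp : CmpRel (S (x j)) (S p) := hkcmp n
    have hc := contr' hρ.1 hcontr (x j) p hcmp
    have hdj : dist (S (x j)) (T (x j)) = d j := by simp only [hdd]; rw [hx2 j]
    have hMF : MF T S (x j) p ≤ r + en n := by
      refine MF_le ?_ ?_ ?_ ?_ ?_
      · have h1 : 0 ≤ r := dist_nonneg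
        have h2 : 0 ≤ d j := hdnn j
        simp only [hen]; linarith
      · rw [hdj]
        have h1 : 0 ≤ r := dist_nonneg
        have h2 : 0 ≤ dist (S (x j)) (S p) := dist_nonneg
        simp only [hen]; linarith
      · have h2 : 0 ≤ en n := by
          simp only [hen]; have := hdnn j; positivity
        linarith
      · have htri := dist_triangle (S (x j)) (S p) (T p)
        have h2 : 0 ≤ d j := hdnn j
        simp only [hen]; linarith
      · have htri := dist_triangle (S p) (S (x j)) (T (x j))
        rw [hdj, dist_comm (S p) (S (x j))] at htri
        have h1 : 0 ≤ r := dist_nonneg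
        simp only [hen]; linarith
    have hlow : r - en n ≤ dist (T (x j)) (T p) := by
      have htri := dist_triangle (S p) (T (x j)) (T p)
      have h2 : dist (S p) (T (x j)) ≤ en n := by
        have htri2 := dist_triangle (S p) (S (x j)) (T (x j))
        rw [hdj, dist_comm (S p) (S (x j))] at htri2
        simp only [hen]; linarith
      simp only [hr] at *
      linarith
    exact hlow.trans (hc.trans (hρ.1.2.1 _ _ (MF_nonneg T S (x j) p) hMF))
  have henlim : Tendsto en atTop (𝓝 0) := by
    have h1 : Tendsto (fun n => dist (S (x (k n + 1))) (S p)) atTop (𝓝 0) :=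
      tendsto_iff_dist_tendsto_zero.mp hklim
    have h2 : Tendsto (fun n => d (k n + 1)) atTop (𝓝 0) := by
      have hkk : Tendsto (fun n => k n + 1) atTop atTop :=
        (tendsto_add_atTop_nat 1).comp hk.tendsto_atTop
      exact hd0.comp hkk
    simpa using h1.add h2
  have hrle : r ≤ ρ r := by
    have hL : Tendsto (fun n => r - en n) atTop (𝓝 r) := by
      simpa using tendsto_const_nhds (x := r) (f := atTop (α := ℕ)) |>.sub henlim
    have hR : Tendsto (fun n => ρ (r + en n)) atTop (𝓝 (ρ r)) := by
      have h1 : Tendsto (fun n => r + en n) atTop (𝓝 r) := by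
        simpa using tendsto_const_nhds (x := r) (f := atTop (α := ℕ)) |>.add henlim
      have h2 : Tendsto (fun n => r + en n) atTop (𝓝[Set.Ici 0] r) :=
        tendsto_nhdsWithin_of_tendsto_nhds_of_eventually_within _ h1
          (Eventually.of_forall fun n => by
            have h3 : 0 ≤ en n := by
              simp only [hen]; have := hdnn (k n + 1); positivity
            have h4 : (0:ℝ) ≤ r := dist_nonneg
            simp only [Set.mem_Ici]; linarith)
      exact ((hρc r dist_nonneg).tendsto).comp h2
    exact le_of_tendsto_of_tendsto' hL hR hstep
  have hr0 : r = 0 := by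
    rcases eq_or_lt_of_le (dist_nonneg : (0:ℝ) ≤ r) with h | h
    · exact h.symm
    · exact absurd hrle (not_le.2 (comp_lt hρ.1 h))
  have hSpTp : S p = T p := by rwa [← dist_eq_zero]
  refine ⟨p, hSpTp, hSpSSp, ?_⟩
  have : (fun n => S (x (n + 1))) = fun n => T (x n) := funext hx2
  rwa [this] at hzlim

lemma fix_pt {X : Type*} [MetricSpace X] [PartialOrder X] {T S : X → X} {ρ : ℝ → ℝ}
    (hρ : IsHalfComparisonFn ρ)
    (hcontr : ∀ x y, S x ≤ S y → dist (T x) (T y) ≤ ρ (MF T S x y))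
    (wc : WeaklyCompatible T S) (p : X) (hp : S p = T p) (hpp : S p ≤ S (S p)) :
    S (S p) = S p ∧ T (S p) = S p := by
  obtain ⟨z, hz⟩ : ∃ z, S p = z := ⟨_, rfl⟩
  rw [hz]
  have hTpz : T p = z := by rw [← hp]; exact hz
  have h1 : S (T p) = T (S p) := wc p hp
  have hSz : S z = T z := by
    calc S z = S (T p) := by rw [hTpz]
    _ = T (S p) := h1
    _ = T z := by rw [hz]
  have hord : S p ≤ S z := by rw [hz]; rw [hz] at hpp; exact hpp
  have hc := contr' hρ.1 hcontr p z (Or.inl hord)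
  set r' := dist z (S z) with hr'
  have e0 : dist (T p) (T z) = r' := by rw [hTpz, ← hSz]
  have eA : dist (S p) (S z) = r' := by rw [hz]
  have eB : dist (S p) (T p) = 0 := by rw [hz, hTpz, dist_self]
  have eC : dist (S z) (T z) = 0 := by rw [← hSz, dist_self]
  have eD : dist (S p) (T z) = r' := by rw [hz, ← hSz]
  have eE : dist (S z) (T p) = r' := by rw [hTpz, dist_comm]
  have hMF : MF T S p z ≤ r' := by
    refine MF_le (le_of_eq eA) ?_ ?_ (le_of_eq eD) (le_of_eq eE)
    · rw [eB]; exact dist_nonneg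
    · rw [eC]; exact dist_nonneg
  have hrle : r' ≤ ρ r' :=
    calc r' = dist (T p) (T z) := e0.symm
    _ ≤ ρ (MF T S p z) := hc
    _ ≤ ρ r' := hρ.1.2.1 _ _ (MF_nonneg T S p z) hMF
  have hr0 : r' = 0 := by
    rcases eq_or_lt_of_le (dist_nonneg : (0:ℝ) ≤ r') with h | h
    · exact h.symm
    · exact absurd hrle (not_le.2 (comp_lt hρ.1 h))
  have hzSz : z = S z := by rwa [← dist_eq_zero]
  refine ⟨hzSz.symm, ?_⟩
  rw [← hSz]; exact hzSz.symm

lemma orbit_lim {X : Type*} [MetricSpace X] [PartialOrder X] {T S : X → X} {ρ : ℝ → ℝ}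
    (hTS : SIncreasing T S) (hρ : IsHalfComparisonFn ρ)
    (hcontr : ∀ x y, S x ≤ S y → dist (T x) (T y) ≤ ρ (MF T S x y))
    (a : X) (c : ℕ → X) (ha : S a = T a) (hcmp : CmpRel (T a) (S (c 0)))
    (hcstep : ∀ n, S (c (n + 1)) = T (c n)) :
    Tendsto (fun n => dist (S a) (S (c n))) atTop (𝓝 0) := by
  have hacmp : ∀ n, CmpRel (S a) (S (c n)) := by
    intro n
    induction n with
    | zero => rw [ha]; exact hcmp
    | succ n ih =>
      rw [hcstep n, ha]
      rcases ih with h | h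
      · exact Or.inl (hTS _ _ h)
      · exact Or.inr (hTS _ _ h)
  set δ : ℕ → ℝ := fun n => dist (S a) (S (c n)) with hδ
  have hstep : ∀ n, δ (n + 1) ≤ ρ (2 * δ n) := by
    intro n
    refine half_step hρ dist_nonneg (MF_nonneg T S a (c n)) ?_ ?_
    · have e1 : δ (n + 1) = dist (T a) (T (c n)) := by
        simp only [hδ]; rw [hcstep n, ha]
      rw [e1]
      exact contr' hρ.1 hcontr a (c n) (hacmp n)
    · refine MF_le ?_ ?_ ?_ ?_ ?_
      · have : (0:ℝ) ≤ δ (n + 1) := dist_nonneg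
        simp only [hδ] at *; linarith
      · rw [ha, dist_self]
        have h1 : (0:ℝ) ≤ δ n := dist_nonneg
        have h2 : (0:ℝ) ≤ δ (n + 1) := dist_nonneg
        linarith
      · rw [← hcstep n]
        have htri := dist_triangle (S (c n)) (S a) (S (c (n + 1)))
        rw [dist_comm (S (c n)) (S a)] at htri
        simp only [hδ] at *; linarith
      · rw [← hcstep n]
        have : (0:ℝ) ≤ δ n := dist_nonneg
        simp only [hδ] at *; linarith
      · rw [← ha, dist_comm]
        have : (0:ℝ) ≤ δ (n + 1) := dist_nonneg
        simp only [hδ] at *; linarith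
  exact iter_seq_tendsto hρ.2 δ (fun n => dist_nonneg) (fun n => by simpa using hstep n)

/-- order-theoretic quasi-contraction corollary with a continuous
half-comparison function (Corollary 3.9, I-regular case). -/
theorem quasicontraction_ordered {X : Type*} [MetricSpace X] [PartialOrder X]
    (E : Set X) (T S : X → X)
    (hTE : ∀ x, T x ∈ E) (hES : E ⊆ Set.range S) (hTS : SIncreasing T S)
    (ρ : ℝ → ℝ) (hρ : IsHalfComparisonFn ρ) (hρc : ContinuousOn ρ (Set.Ici 0))
    (hcontr : ∀ x y, S x ≤ S y →
      dist (T x) (T y) ≤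
        ρ (max (dist (S x) (S y)) (max (dist (S x) (T x)) (max (dist (S y) (T y))
            (max (dist (S x) (T y)) (dist (S y) (T x)))))))
    (hx0 : ∃ x₀, S x₀ ≤ T x₀)
    (hE : OBarComplete E) (hreg : IRegularOn E S) :
    (∃ x, S x = T x) ∧
    (WeaklyCompatible T S → CoincTSDirected T S →
      ∃ z, S z = z ∧ T z = z ∧ (∀ w, S w = w → T w = w → w = z) ∧
      ∀ x : ℕ → X, S (x 0) ≤ T (x 0) → (∀ n, S (x (n + 1)) = T (x n)) →
        Tendsto (fun n => T (x n)) atTop (𝓝 z)) := by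
  classical
  obtain ⟨x₀, hx₀⟩ := hx0
  have hcontr' : ∀ x y, S x ≤ S y → dist (T x) (T y) ≤ ρ (MF T S x y) := hcontr
  have hgex : ∀ y : X, ∃ p, y ∈ E → S p = y := by
    intro y
    by_cases h : y ∈ E
    · obtain ⟨p, hp⟩ := hES h
      exact ⟨p, fun _ => hp⟩
    · exact ⟨y, fun h' => absurd h' h⟩
  choose g hg using hgex
  let xs : ℕ → X := fun n => Nat.rec x₀ (fun _ p => g (T p)) n
  have hxs : ∀ n, S (xs (n + 1)) = T (xs n) := fun n => hg _ (hTE _)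
  have hxs1 : S (xs 0) ≤ T (xs 0) := hx₀
  obtain ⟨p, hp, hpp, hplim⟩ :=
    key_coinc E T S hTE hES hTS ρ hρ hρc hcontr' hE hreg xs hxs1 hxs
  refine ⟨⟨p, hp⟩, ?_⟩
  intro wc hdir
  obtain ⟨hz1, hz2⟩ := fix_pt hρ hcontr' wc p hp hpp
  have huniq : ∀ w, S w = w → T w = w → w = S p := by
    intro w hw1 hw2
    have hwc : S w = T w := by rw [hw1, hw2]
    have hzc : S (S p) = T (S p) := by rw [hz1, hz2]
    obtain ⟨c0, hc1, hc2⟩ := hdir (S p) w hzc hwc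
    let c : ℕ → X := fun n => Nat.rec c0 (fun _ q => g (T q)) n
    have hc0 : c 0 = c0 := rfl
    have hcstep : ∀ n, S (c (n + 1)) = T (c n) := fun n => hg _ (hTE _)
    have l1 := orbit_lim hTS hρ hcontr' (S p) c hzc (hc0 ▸ hc1) hcstep
    have l2 := orbit_lim hTS hρ hcontr' w c hwc (hc0 ▸ hc2) hcstep
    have hdist0 : dist (S (S p)) (S w) = 0 := by
      have hle : ∀ n, dist (S (S p)) (S w) ≤
          dist (S (S p)) (S (c n)) + dist (S w) (S (c n)) := by
        intro n
        have := dist_triangle (S (S p)) (S (c n)) (S w)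
        rw [dist_comm (S (c n)) (S w)] at this
        linarith
      have hlim : Tendsto (fun n => dist (S (S p)) (S (c n)) + dist (S w) (S (c n)))
          atTop (𝓝 0) := by simpa using l1.add l2
      have h0 := ge_of_tendsto' hlim hle
      exact le_antisymm h0 dist_nonneg
    have hSSw : S (S p) = S w := by rwa [dist_eq_zero] at hdist0
    rw [hz1, hw1] at hSSw
    exact hSSw.symm
  refine ⟨S p, hz1, hz2, huniq, ?_⟩
  intro y hy1 hy2
  obtain ⟨q, hq, hqq, hqlim⟩ :=
    key_coinc E T S hTE hES hTS ρ hρ hρc hcontr' hE hreg y hy1 hy2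
  obtain ⟨hq1, hq2⟩ := fix_pt hρ hcontr' wc q hq hqq
  have hqp : S q = S p := huniq (S q) hq1 hq2
  rwa [hqp] at hqlim
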